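/- In the setting of the time-varying covariance recursion with M Schur stable, suppose additionally that ‖M‖₂ < 1 and that ‖Ψ_n‖₂ = ‖Σ_{Z_n} − Σ_{Z_{n-1}}‖₂ ≤ ξ for all n ≥ 1. Let C ∈ ℝ^{m×p} and for each n let Σ_{Δ_∞^n} be the unique symmetric solution of X = M X Mᵀ + Σ_W + L Σ_{Z_n} Lᵀ. Then for every n ≥ 0, ‖C (Σ_{Δ_n} − Σ_{Δ_∞^n}) Cᵀ‖₂ ≤ ξ ‖C‖₂² ‖L‖₂² ‖M‖₂² / (1 − ‖M‖₂²)². -/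

import Mathlib

open Matrix
open scoped Matrix.Norms.L2Operator

/-- the error bound underlying `ε` in (14)/Lemma 5 of the paper. For the
time-varying observer error covariance recursion with `‖M‖₂ < 1` and
`‖Σ_{Z_n} - Σ_{Z_{n-1}}‖₂ ≤ ξ` for all `n ≥ 1`, letting `Σ_{Δ_∞^n}` (here `SInf n`) be the
unique symmetric solution of `X = M X Mᵀ + Σ_W + L Σ_{Z_n} Lᵀ`, we have
`‖C (Σ_{Δ_n} - Σ_{Δ_∞^n}) Cᵀ‖₂ ≤ ξ ‖C‖₂² ‖L‖₂² ‖M‖₂² / (1 - ‖M‖₂²)²` for all `n`.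
Here `‖·‖` is the spectral (L2 operator) norm. -/
theorem time_varying_covariance_error_bound
    {p m : ℕ}
    (M : Matrix (Fin p) (Fin p) ℝ) (L : Matrix (Fin p) (Fin m) ℝ)
    (C : Matrix (Fin m) (Fin p) ℝ)
    (hM : ‖M‖ < 1)
    (SW : Matrix (Fin p) (Fin p) ℝ) (hSW : SWᵀ = SW)
    (SZ : ℕ → Matrix (Fin m) (Fin m) ℝ) (hSZ : ∀ n, (SZ n)ᵀ = SZ n)
    (ξ : ℝ) (hξ : ∀ n : ℕ, 1 ≤ n → ‖SZ n - SZ (n - 1)‖ ≤ ξ)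
    (SD : ℕ → Matrix (Fin p) (Fin p) ℝ)
    (h0 : SD 0 = M * SD 0 * Mᵀ + SW + L * SZ 0 * Lᵀ)
    (hrec : ∀ n : ℕ, 1 ≤ n → SD n = M * SD (n - 1) * Mᵀ + SW + L * SZ n * Lᵀ)
    (SInf : ℕ → Matrix (Fin p) (Fin p) ℝ)
    (hSInfSymm : ∀ n, (SInf n)ᵀ = SInf n)
    (hSInf : ∀ n, SInf n = M * SInf n * Mᵀ + SW + L * SZ n * Lᵀ) :
    ∀ n : ℕ,
      ‖C * (SD n - SInf n) * Cᵀ‖ ≤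
        ξ * ‖C‖ ^ 2 * ‖L‖ ^ 2 * ‖M‖ ^ 2 / (1 - ‖M‖ ^ 2) ^ 2 := by
  have htr : ∀ {a b : ℕ} (A : Matrix (Fin a) (Fin b) ℝ), ‖Aᵀ‖ = ‖A‖ := by
    intro a b A
    rw [← Matrix.l2_opNorm_conjTranspose A, Matrix.conjTranspose_eq_transpose_of_trivial]
  have hMnn : (0:ℝ) ≤ ‖M‖ := norm_nonneg _
  have h1 : (0:ℝ) < 1 - ‖M‖ ^ 2 := by nlinarith
  have hξ0 : (0:ℝ) ≤ ξ := le_trans (norm_nonneg _) (hξ 1 le_rfl)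
  have hs : ∀ {a b : ℕ} (A : Matrix (Fin a) (Fin b) ℝ) (X : Matrix (Fin b) (Fin b) ℝ),
      ‖A * X * Aᵀ‖ ≤ ‖A‖ ^ 2 * ‖X‖ := by
    intro a b A X
    calc ‖A * X * Aᵀ‖ ≤ ‖A * X‖ * ‖Aᵀ‖ := Matrix.l2_opNorm_mul _ _
      _ ≤ (‖A‖ * ‖X‖) * ‖Aᵀ‖ :=
          mul_le_mul_of_nonneg_right (Matrix.l2_opNorm_mul A X) (norm_nonneg _)
      _ = ‖A‖ ^ 2 * ‖X‖ := by rw [htr]; ring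
  set B : ℝ := ξ * ‖L‖ ^ 2 * ‖M‖ ^ 2 / (1 - ‖M‖ ^ 2) ^ 2 with hB
  have hBnn : 0 ≤ B := by positivity
  -- drift of the fixed points
  have hD : ∀ n : ℕ, ‖SInf n - SInf (n+1)‖ ≤ ξ * ‖L‖ ^ 2 / (1 - ‖M‖ ^ 2) := by
    intro n
    have hDeq : SInf n - SInf (n+1)
        = M * (SInf n - SInf (n+1)) * Mᵀ + L * (SZ n - SZ (n+1)) * Lᵀ := by
      calc SInf n - SInf (n+1)
          = (M * SInf n * Mᵀ + SW + L * SZ n * Lᵀ)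
            - (M * SInf (n+1) * Mᵀ + SW + L * SZ (n+1) * Lᵀ) := by
            rw [← hSInf n, ← hSInf (n+1)]
        _ = M * (SInf n - SInf (n+1)) * Mᵀ + L * (SZ n - SZ (n+1)) * Lᵀ := by
            simp only [Matrix.mul_sub, Matrix.sub_mul]; abel
    have hZ : ‖SZ n - SZ (n+1)‖ ≤ ξ := by
      rw [norm_sub_rev]
      simpa using hξ (n+1) (by omega)
    have hnorm : ‖SInf n - SInf (n+1)‖
        ≤ ‖M‖ ^ 2 * ‖SInf n - SInf (n+1)‖ + ‖L‖ ^ 2 * ξ := by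
      calc ‖SInf n - SInf (n+1)‖
          = ‖M * (SInf n - SInf (n+1)) * Mᵀ + L * (SZ n - SZ (n+1)) * Lᵀ‖ := by
            rw [← hDeq]
        _ ≤ ‖M * (SInf n - SInf (n+1)) * Mᵀ‖ + ‖L * (SZ n - SZ (n+1)) * Lᵀ‖ :=
            norm_add_le _ _
        _ ≤ ‖M‖ ^ 2 * ‖SInf n - SInf (n+1)‖ + ‖L‖ ^ 2 * ξ := by
            have h2 : ‖L * (SZ n - SZ (n+1)) * Lᵀ‖ ≤ ‖L‖ ^ 2 * ξ :=
              le_trans (hs L _) (mul_le_mul_of_nonneg_left hZ (by positivity))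
            exact add_le_add (hs M _) h2
    rw [le_div_iff₀ h1]
    nlinarith [norm_nonneg (SInf n - SInf (n+1))]
  -- main induction
  have hE : ∀ n : ℕ, ‖SD n - SInf n‖ ≤ B := by
    intro n
    induction n with
    | zero =>
      have hEeq : SD 0 - SInf 0 = M * (SD 0 - SInf 0) * Mᵀ := by
        calc SD 0 - SInf 0
            = (M * SD 0 * Mᵀ + SW + L * SZ 0 * Lᵀ)
              - (M * SInf 0 * Mᵀ + SW + L * SZ 0 * Lᵀ) := by rw [← h0, ← hSInf 0]
          _ = M * (SD 0 - SInf 0) * Mᵀ := by simp only [Matrix.mul_sub, Matrix.sub_mul]; abel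
      have h2 : ‖SD 0 - SInf 0‖ ≤ ‖M‖ ^ 2 * ‖SD 0 - SInf 0‖ := by
        calc ‖SD 0 - SInf 0‖ = ‖M * (SD 0 - SInf 0) * Mᵀ‖ := by rw [← hEeq]
          _ ≤ ‖M‖ ^ 2 * ‖SD 0 - SInf 0‖ := hs M _
      nlinarith [norm_nonneg (SD 0 - SInf 0)]
    | succ n ih =>
      have hEeq : SD (n+1) - SInf (n+1) = M * (SD n - SInf (n+1)) * Mᵀ := by
        have h3 := hrec (n+1) (by omega)
        simp only [Nat.add_sub_cancel] at h3
        calc SD (n+1) - SInf (n+1)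
            = (M * SD n * Mᵀ + SW + L * SZ (n+1) * Lᵀ)
              - (M * SInf (n+1) * Mᵀ + SW + L * SZ (n+1) * Lᵀ) := by
              rw [← h3, ← hSInf (n+1)]
          _ = M * (SD n - SInf (n+1)) * Mᵀ := by simp only [Matrix.mul_sub, Matrix.sub_mul]; abel
      have htri : ‖SD n - SInf (n+1)‖ ≤ B + ξ * ‖L‖ ^ 2 / (1 - ‖M‖ ^ 2) := by
        calc ‖SD n - SInf (n+1)‖
            = ‖(SD n - SInf n) + (SInf n - SInf (n+1))‖ := by abel_nf
          _ ≤ ‖SD n - SInf n‖ + ‖SInf n - SInf (n+1)‖ := norm_add_le _ _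
          _ ≤ B + ξ * ‖L‖ ^ 2 / (1 - ‖M‖ ^ 2) := add_le_add ih (hD n)
      have hkey : ‖M‖ ^ 2 * (B + ξ * ‖L‖ ^ 2 / (1 - ‖M‖ ^ 2)) = B := by
        rw [hB]; field_simp; ring
      calc ‖SD (n+1) - SInf (n+1)‖ = ‖M * (SD n - SInf (n+1)) * Mᵀ‖ := by rw [← hEeq]
        _ ≤ ‖M‖ ^ 2 * ‖SD n - SInf (n+1)‖ := hs M _
        _ ≤ ‖M‖ ^ 2 * (B + ξ * ‖L‖ ^ 2 / (1 - ‖M‖ ^ 2)) :=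
            mul_le_mul_of_nonneg_left htri (by positivity)
        _ = B := hkey
  intro n
  calc ‖C * (SD n - SInf n) * Cᵀ‖ ≤ ‖C‖ ^ 2 * ‖SD n - SInf n‖ := hs C _
    _ ≤ ‖C‖ ^ 2 * B := mul_le_mul_of_nonneg_left (hE n) (by positivity)
    _ = ξ * ‖C‖ ^ 2 * ‖L‖ ^ 2 * ‖M‖ ^ 2 / (1 - ‖M‖ ^ 2) ^ 2 := by rw [hB]; ring
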